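/- Let Γ be the random bipartite graph. Then S_{l,r}(Γ) = {σ ∈ Sym_{l,r}(Γ) : σ preserves the parity of cross-types in every (2×2)-subgraph of Γ}. -/

import Mathlib

/-! Preamble: bipartite graphs, the random bipartite graph, side-preserving
permutation groups, switches, switch groups, and related notions. -/

/-- A bipartite graph on a vertex type `V`: the sides `left` and `right`
partition `V`, both sides are nonempty, and `adj` (the relation `P₁`) only holds
from `left` to `right`.  The relation `P₂` is the complement of `adj` on
`left × right`. -/
structure BipartiteGraph (V : Type*) where
  left : Set V
  right : Set V
  adj : V → V → Prop
  left_nonempty : left.Nonempty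
  right_nonempty : right.Nonempty
  union_eq : left ∪ right = Set.univ
  disjoint_sides : Disjoint left right
  adj_dom : ∀ a b, adj a b → a ∈ left ∧ b ∈ right

/-- The two sides of a bipartite graph. -/
inductive BSide : Type
  | l : BSide
  | r : BSide
deriving DecidableEq

namespace BipartiteGraph

variable {V : Type*} (Γ : BipartiteGraph V)

/-- The side of the graph indexed by an element of `BSide`. -/
def side : BSide → Set V
  | BSide.l => Γ.left
  | BSide.r => Γ.right

/-- `Γ` is (isomorphic to) the random bipartite graph: it is countable, both
sides are infinite, and it satisfies the extension properties `Θₙ` for all `n`. -/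
structure IsRandom : Prop where
  countable : Countable V
  left_infinite : Γ.left.Infinite
  right_infinite : Γ.right.Infinite
  ext_left : ∀ X₁ X₂ : Finset V, ↑X₁ ⊆ Γ.left → ↑X₂ ⊆ Γ.left → Disjoint X₁ X₂ →
      ∃ v ∈ Γ.right, (∀ x ∈ X₁, Γ.adj x v) ∧ (∀ x ∈ X₂, ¬ Γ.adj x v)
  ext_right : ∀ X₁ X₂ : Finset V, ↑X₁ ⊆ Γ.right → ↑X₂ ⊆ Γ.right → Disjoint X₁ X₂ →
      ∃ v ∈ Γ.left, (∀ x ∈ X₁, Γ.adj v x) ∧ (∀ x ∈ X₂, ¬ Γ.adj v x)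

/-- `Sym_{l,r}(Γ)`: the group of permutations of `V` preserving both sides. -/
def symLR : Subgroup (Equiv.Perm V) where
  carrier := {g | (∀ v, g v ∈ Γ.left ↔ v ∈ Γ.left) ∧ (∀ v, g v ∈ Γ.right ↔ v ∈ Γ.right)}
  one_mem' := ⟨fun _ => Iff.rfl, fun _ => Iff.rfl⟩
  mul_mem' := by
    rintro a b ⟨hal, har⟩ ⟨hbl, hbr⟩
    exact ⟨fun v => (hal (b v)).trans (hbl v), fun v => (har (b v)).trans (hbr v)⟩
  inv_mem' := by
    rintro a ⟨hal, har⟩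
    refine ⟨fun v => ?_, fun v => ?_⟩
    · have h := hal (a⁻¹ v); simp only [← Equiv.Perm.mul_apply, mul_inv_cancel, Equiv.Perm.one_apply] at h; exact h.symm
    · have h := har (a⁻¹ v); simp only [← Equiv.Perm.mul_apply, mul_inv_cancel, Equiv.Perm.one_apply] at h; exact h.symm

/-- The automorphism group of `Γ`: side-preserving permutations preserving `adj`
(and hence both cross-types). -/
def autGroup : Subgroup (Equiv.Perm V) where
  carrier := {g | g ∈ Γ.symLR ∧ ∀ a b, Γ.adj a b ↔ Γ.adj (g a) (g b)}
  one_mem' := ⟨Γ.symLR.one_mem, fun _ _ => Iff.rfl⟩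
  mul_mem' := by
    rintro a b ⟨ha, ha2⟩ ⟨hb, hb2⟩
    exact ⟨mul_mem ha hb, fun x y => (hb2 x y).trans (ha2 (b x) (b y))⟩
  inv_mem' := by
    rintro a ⟨ha, ha2⟩
    refine ⟨inv_mem ha, fun x y => ?_⟩
    have h := ha2 (a⁻¹ x) (a⁻¹ y)
    simp only [← Equiv.Perm.mul_apply, mul_inv_cancel, Equiv.Perm.one_apply] at h
    exact h.symm

/-- A permutation `g` is a switch with respect to a set `A` if it preserves the
sides and, for every cross-edge `(a, b)`, the cross-type of `(a, b)` is preserved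
if and only if `|{a, b} ∩ A| ≠ 1`. -/
def IsSwitch (g : Equiv.Perm V) (A : Set V) : Prop :=
  g ∈ Γ.symLR ∧ ∀ a ∈ Γ.left, ∀ b ∈ Γ.right,
    ((Γ.adj a b ↔ Γ.adj (g a) (g b)) ↔ ({a, b} ∩ A : Set V).ncard ≠ 1)

/-- The restriction of a map `g` to a set `S` is a switch with respect to `A`:
the condition of `IsSwitch` holds for all cross-edges inside `S`. -/
def IsSwitchOn (g : V → V) (S : Set V) (A : Set V) : Prop :=
  ∀ a ∈ S ∩ Γ.left, ∀ b ∈ S ∩ Γ.right,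
    ((Γ.adj a b ↔ Γ.adj (g a) (g b)) ↔ ({a, b} ∩ A : Set V).ncard ≠ 1)

/-- The restriction of a map `g` to a set `S` is an isomorphism: `g` preserves
the cross-type of every cross-edge inside `S`. -/
def IsIsoOn (g : V → V) (S : Set V) : Prop :=
  ∀ a ∈ S ∩ Γ.left, ∀ b ∈ S ∩ Γ.right, (Γ.adj a b ↔ Γ.adj (g a) (g b))

end BipartiteGraph

/-- A subgroup of the full symmetric group is closed (in the topology of
pointwise convergence) iff it contains every permutation which agrees with some
member of the subgroup on each finite subset. -/
def IsClosedSubgroup {V : Type*} (G : Subgroup (Equiv.Perm V)) : Prop :=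
  ∀ g : Equiv.Perm V, (∀ F : Finset V, ∃ h ∈ G, ∀ x ∈ F, h x = g x) → g ∈ G

/-- The closed subgroup generated by a set of permutations: the intersection of
all closed subgroups containing the set. -/
def closedClosure {V : Type*} (S : Set (Equiv.Perm V)) : Subgroup (Equiv.Perm V) :=
  sInf {G : Subgroup (Equiv.Perm V) | IsClosedSubgroup G ∧ S ⊆ ↑G}

namespace BipartiteGraph

variable {V : Type*} (Γ : BipartiteGraph V)

/-- The switch group `S_X(Γ)`: the closed subgroup of `Sym_{l,r}(Γ)` generated
by `Aut(Γ)` together with all switches with respect to a single vertex `v ∈ R_i`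
for `i ∈ X`. -/
def switchGroup (X : Set BSide) : Subgroup (Equiv.Perm V) :=
  closedClosure ((Γ.autGroup : Set (Equiv.Perm V)) ∪
    {g | ∃ i ∈ X, ∃ v ∈ Γ.side i, Γ.IsSwitch g {v}})

/-- The group `S_X(Γ)* `: the closed subgroup generated by `S_X(Γ)` together with
a switch `ρ` with respect to the whole side `R_l`. -/
def switchGroupStar (X : Set BSide) : Subgroup (Equiv.Perm V) :=
  closedClosure ((Γ.switchGroup X : Set (Equiv.Perm V)) ∪ {g | Γ.IsSwitch g Γ.left})

/-- Membership in `Aut(Γ)*`, the group of side-preserving permutations which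
either preserve all cross-types on `R_l × R_r` or exchange all cross-types on
`R_l × R_r`. -/
def InAutStar (g : Equiv.Perm V) : Prop :=
  g ∈ Γ.symLR ∧
    ((∀ a ∈ Γ.left, ∀ b ∈ Γ.right, (Γ.adj a b ↔ Γ.adj (g a) (g b))) ∨
     (∀ a ∈ Γ.left, ∀ b ∈ Γ.right, (Γ.adj a b ↔ ¬ Γ.adj (g a) (g b))))

/-- The number of cross-edges of cross-type `P₁` inside the set `S`. -/
noncomputable def edgeCount (S : Set V) : ℕ :=
  {p : V × V | p.1 ∈ S ∧ p.2 ∈ S ∧ Γ.adj p.1 p.2}.ncard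

/-- `g` preserves the parity of cross-types on `S`: the number of `P₁`
cross-edges in `S` is even iff the number of `P₁` cross-edges in `g[S]` is even. -/
def PreservesParityOn (g : V → V) (S : Set V) : Prop :=
  Even (Γ.edgeCount S) ↔ Even (Γ.edgeCount (g '' S))

/-- An `(m × n)`-subgraph of `Γ`: a finite set of vertices with `m` vertices on
the left side and `n` vertices on the right side. -/
def IsMNSubgraph (S : Set V) (m n : ℕ) : Prop :=
  S.Finite ∧ (S ∩ Γ.left).ncard = m ∧ (S ∩ Γ.right).ncard = n

end BipartiteGraph

section PropHelpers

lemma prop_bool (p : Prop) : ∃ b : Bool, p ↔ b = true := by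
  classical
  exact ⟨decide p, Iff.intro (fun h => decide_eq_true h) (fun h => of_decide_eq_true h)⟩

lemma iff_rect {p q r s p' q' r' s' : Prop}
    (h : ((p ↔ q) ↔ (r ↔ s)) ↔ ((p' ↔ q') ↔ (r' ↔ s'))) :
    ((p ↔ p') ↔ (q ↔ q')) ↔ ((r ↔ r') ↔ (s ↔ s')) := by
  obtain ⟨b1, e1⟩ := prop_bool p
  obtain ⟨b2, e2⟩ := prop_bool q
  obtain ⟨b3, e3⟩ := prop_bool r
  obtain ⟨b4, e4⟩ := prop_bool s
  obtain ⟨b5, e5⟩ := prop_bool p'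
  obtain ⟨b6, e6⟩ := prop_bool q'
  obtain ⟨b7, e7⟩ := prop_bool r'
  obtain ⟨b8, e8⟩ := prop_bool s'
  simp only [e1, e2, e3, e4, e5, e6, e7, e8] at h ⊢
  clear e1 e2 e3 e4 e5 e6 e7 e8
  revert h
  revert b1 b2 b3 b4 b5 b6 b7 b8
  decide

lemma iff_rect' {p q r s p' q' r' s' x1 x2 y1 y2 : Prop}
    (h11 : (p ↔ p') ↔ (x1 ↔ y1)) (h12 : (q ↔ q') ↔ (x1 ↔ y2))
    (h21 : (r ↔ r') ↔ (x2 ↔ y1)) (h22 : (s ↔ s') ↔ (x2 ↔ y2)) :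
    ((p ↔ q) ↔ (r ↔ s)) ↔ ((p' ↔ q') ↔ (r' ↔ s')) := by
  obtain ⟨b1, e1⟩ := prop_bool p
  obtain ⟨b2, e2⟩ := prop_bool q
  obtain ⟨b3, e3⟩ := prop_bool r
  obtain ⟨b4, e4⟩ := prop_bool s
  obtain ⟨b5, e5⟩ := prop_bool p'
  obtain ⟨b6, e6⟩ := prop_bool q'
  obtain ⟨b7, e7⟩ := prop_bool r'
  obtain ⟨b8, e8⟩ := prop_bool s'
  obtain ⟨b9, e9⟩ := prop_bool x1
  obtain ⟨b10, e10⟩ := prop_bool x2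
  obtain ⟨b11, e11⟩ := prop_bool y1
  obtain ⟨b12, e12⟩ := prop_bool y2
  simp only [e1, e2, e3, e4, e5, e6, e7, e8, e9, e10, e11, e12] at h11 h12 h21 h22 ⊢
  clear e1 e2 e3 e4 e5 e6 e7 e8 e9 e10 e11 e12
  revert h11 h12 h21 h22
  revert b1 b2 b3 b4 b5 b6 b7 b8 b9 b10 b11 b12
  decide

lemma switch_comp_prop {P Q R Av Ad Bv Bd : Prop}
    (h1 : (P ↔ Q) ↔ (Ad ↔ Bd)) (h2 : (Q ↔ R) ↔ (Av ↔ Bv))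
    (hA : Av → ¬Ad) (hB : Bv → ¬Bd) :
    (P ↔ R) ↔ ((Av ∨ Ad) ↔ (Bv ∨ Bd)) := by
  obtain ⟨b1, e1⟩ := prop_bool P
  obtain ⟨b2, e2⟩ := prop_bool Q
  obtain ⟨b3, e3⟩ := prop_bool R
  obtain ⟨b4, e4⟩ := prop_bool Av
  obtain ⟨b5, e5⟩ := prop_bool Ad
  obtain ⟨b6, e6⟩ := prop_bool Bv
  obtain ⟨b7, e7⟩ := prop_bool Bd
  simp only [e1, e2, e3, e4, e5, e6, e7] at h1 h2 hA hB ⊢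
  clear e1 e2 e3 e4 e5 e6 e7
  revert h1 h2 hA hB
  cases b1 <;> cases b2 <;> cases b3 <;> cases b4 <;> cases b5 <;> cases b6 <;>
    cases b7 <;> decide

lemma key_prop {d0 d1 d2 d3 : Prop} (h : (d0 ↔ d1) ↔ (d2 ↔ d3)) :
    d0 ↔ (¬d1 ↔ ¬(d2 ↔ d3)) := by
  obtain ⟨b1, e1⟩ := prop_bool d0
  obtain ⟨b2, e2⟩ := prop_bool d1
  obtain ⟨b3, e3⟩ := prop_bool d2
  obtain ⟨b4, e4⟩ := prop_bool d3
  simp only [e1, e2, e3, e4] at h ⊢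
  clear e1 e2 e3 e4
  revert h
  revert b1 b2 b3 b4
  decide

lemma two_switch_prop {P Q1 Q2 dA dB : Prop}
    (h1 : (P ↔ Q1) ↔ (dA ↔ dB)) (h2 : (P ↔ Q2) ↔ (dA ↔ dB)) : Q1 ↔ Q2 := by
  obtain ⟨b1, e1⟩ := prop_bool P
  obtain ⟨b2, e2⟩ := prop_bool Q1
  obtain ⟨b3, e3⟩ := prop_bool Q2
  obtain ⟨b4, e4⟩ := prop_bool dA
  obtain ⟨b5, e5⟩ := prop_bool dB
  simp only [e1, e2, e3, e4, e5] at h1 h2 ⊢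
  clear e1 e2 e3 e4 e5
  revert h1 h2
  revert b1 b2 b3 b4 b5
  decide

lemma single_switch_prop {P Q Aw Bw : Prop} (hnot : ¬(Aw ∧ Bw))
    (h' : ¬(Q ↔ (Aw ∨ Bw)) ↔ P) : (P ↔ Q) ↔ (Aw ↔ Bw) := by
  obtain ⟨b1, e1⟩ := prop_bool P
  obtain ⟨b2, e2⟩ := prop_bool Q
  obtain ⟨b3, e3⟩ := prop_bool Aw
  obtain ⟨b4, e4⟩ := prop_bool Bw
  simp only [e1, e2, e3, e4] at hnot h' ⊢
  clear e1 e2 e3 e4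
  revert hnot h'
  revert b1 b2 b3 b4
  decide

end PropHelpers
namespace BipartiteGraph

variable {V : Type*} (Γ : BipartiteGraph V)

lemma mem_lr (v : V) : v ∈ Γ.left ∨ v ∈ Γ.right := by
  have hv : v ∈ Γ.left ∪ Γ.right := by rw [Γ.union_eq]; trivial
  exact hv

lemma not_both {v : V} (h1 : v ∈ Γ.left) (h2 : v ∈ Γ.right) : False :=
  Set.disjoint_left.mp Γ.disjoint_sides h1 h2

lemma mem_right_iff {v : V} : v ∈ Γ.right ↔ v ∉ Γ.left := by
  constructor
  · intro h2 h1; exact Γ.not_both h1 h2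
  · intro h1; rcases Γ.mem_lr v with h | h
    · exact absurd h h1
    · exact h

lemma ext_left_avoid (hΓ : Γ.IsRandom) (Y X₁ X₂ : Finset V)
    (h1 : ↑X₁ ⊆ Γ.left) (h2 : ↑X₂ ⊆ Γ.left) (hd : Disjoint X₁ X₂) :
    ∃ v ∈ Γ.right, v ∉ Y ∧ (∀ x ∈ X₁, Γ.adj x v) ∧ (∀ x ∈ X₂, ¬ Γ.adj x v) := by
  classical
  induction Y using Finset.induction generalizing X₁ X₂ with
  | empty =>
    obtain ⟨v, hv, hp⟩ := hΓ.ext_left X₁ X₂ h1 h2 hd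
    exact ⟨v, hv, by simp, hp.1, hp.2⟩
  | @insert y Y hy ih =>
    obtain ⟨a, ha⟩ := (hΓ.left_infinite.diff (X₁ ∪ X₂).finite_toSet).nonempty
    have haL : a ∈ Γ.left := ha.1
    have haX : a ∉ X₁ ∧ a ∉ X₂ := by
      constructor <;> intro h <;> exact ha.2 (by simp [h])
    by_cases hay : Γ.adj a y
    · obtain ⟨v, hvR, hvY, hp1, hp2⟩ := ih X₁ (insert a X₂)
        h1 (by push_cast; exact Set.insert_subset haL h2)
        (by rw [Finset.disjoint_insert_right]; exact ⟨haX.1, hd⟩)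
      refine ⟨v, hvR, ?_, hp1, fun x hx => hp2 x (by simp [hx])⟩
      simp only [Finset.mem_insert]
      rintro (rfl | hvY')
      · exact hp2 a (by simp) hay
      · exact hvY hvY'
    · obtain ⟨v, hvR, hvY, hp1, hp2⟩ := ih (insert a X₁) X₂
        (by push_cast; exact Set.insert_subset haL h1) h2
        (by rw [Finset.disjoint_insert_left]; exact ⟨haX.2, hd⟩)
      refine ⟨v, hvR, ?_, fun x hx => hp1 x (by simp [hx]), hp2⟩
      simp only [Finset.mem_insert]
      rintro (rfl | hvY')
      · exact hay (hp1 a (by simp))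
      · exact hvY hvY'

lemma ext_right_avoid (hΓ : Γ.IsRandom) (Y X₁ X₂ : Finset V)
    (h1 : ↑X₁ ⊆ Γ.right) (h2 : ↑X₂ ⊆ Γ.right) (hd : Disjoint X₁ X₂) :
    ∃ v ∈ Γ.left, v ∉ Y ∧ (∀ x ∈ X₁, Γ.adj v x) ∧ (∀ x ∈ X₂, ¬ Γ.adj v x) := by
  classical
  induction Y using Finset.induction generalizing X₁ X₂ with
  | empty =>
    obtain ⟨v, hv, hp⟩ := hΓ.ext_right X₁ X₂ h1 h2 hd
    exact ⟨v, hv, by simp, hp.1, hp.2⟩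
  | @insert y Y hy ih =>
    obtain ⟨a, ha⟩ := (hΓ.right_infinite.diff (X₁ ∪ X₂).finite_toSet).nonempty
    have haL : a ∈ Γ.right := ha.1
    have haX : a ∉ X₁ ∧ a ∉ X₂ := by
      constructor <;> intro h <;> exact ha.2 (by simp [h])
    by_cases hay : Γ.adj y a
    · obtain ⟨v, hvR, hvY, hp1, hp2⟩ := ih X₁ (insert a X₂)
        h1 (by push_cast; exact Set.insert_subset haL h2)
        (by rw [Finset.disjoint_insert_right]; exact ⟨haX.1, hd⟩)
      refine ⟨v, hvR, ?_, hp1, fun x hx => hp2 x (by simp [hx])⟩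
      simp only [Finset.mem_insert]
      rintro (rfl | hvY')
      · exact hp2 a (by simp) hay
      · exact hvY hvY'
    · obtain ⟨v, hvR, hvY, hp1, hp2⟩ := ih (insert a X₁) X₂
        (by push_cast; exact Set.insert_subset haL h1) h2
        (by rw [Finset.disjoint_insert_left]; exact ⟨haX.2, hd⟩)
      refine ⟨v, hvR, ?_, fun x hx => hp1 x (by simp [hx]), hp2⟩
      simp only [Finset.mem_insert]
      rintro (rfl | hvY')
      · exact hay (hp1 a (by simp))
      · exact hvY hvY'

end BipartiteGraph
namespace BipartiteGraph

open scoped Classical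

variable {V : Type*} (Γ : BipartiteGraph V)

lemma ncard_pair_inter {a b : V} (hab : a ≠ b) (A : Set V) :
    (({a, b} : Set V) ∩ A).ncard ≠ 1 ↔ (a ∈ A ↔ b ∈ A) := by
  by_cases ha : a ∈ A <;> by_cases hb : b ∈ A
  · have h : ({a, b} : Set V) ∩ A = {a, b} := by
      ext x
      simp only [Set.mem_inter_iff, Set.mem_insert_iff, Set.mem_singleton_iff]
      constructor
      · exact fun h => h.1
      · rintro (rfl | rfl) <;> simp [ha, hb]
    rw [h, Set.ncard_pair hab]; simp [ha, hb]
  · have h : ({a, b} : Set V) ∩ A = {a} := by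
      ext x
      simp only [Set.mem_inter_iff, Set.mem_insert_iff, Set.mem_singleton_iff]
      constructor
      · rintro ⟨rfl | rfl, hx⟩
        · rfl
        · exact absurd hx hb
      · rintro rfl; exact ⟨Or.inl rfl, ha⟩
    rw [h, Set.ncard_singleton]; simp [ha, hb]
  · have h : ({a, b} : Set V) ∩ A = {b} := by
      ext x
      simp only [Set.mem_inter_iff, Set.mem_insert_iff, Set.mem_singleton_iff]
      constructor
      · rintro ⟨rfl | rfl, hx⟩
        · exact absurd hx ha
        · rfl
      · rintro rfl; exact ⟨Or.inr rfl, hb⟩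
    rw [h, Set.ncard_singleton]; simp [ha, hb]
  · have h : ({a, b} : Set V) ∩ A = ∅ := by
      ext x
      simp only [Set.mem_inter_iff, Set.mem_insert_iff, Set.mem_singleton_iff,
        Set.mem_empty_iff_false, iff_false, not_and]
      rintro (rfl | rfl) <;> assumption
    rw [h, Set.ncard_empty]; simp [ha, hb]

lemma edgeCount_quad {a a' b b' : V}
    (ha : a ∈ Γ.left) (ha' : a' ∈ Γ.left) (hb : b ∈ Γ.right) (hb' : b' ∈ Γ.right)
    (haa : a ≠ a') (hbb : b ≠ b') :
    Γ.edgeCount {a, a', b, b'} =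
      ((if Γ.adj a b then 1 else 0) + (if Γ.adj a b' then 1 else 0)) +
      ((if Γ.adj a' b then 1 else 0) + (if Γ.adj a' b' then 1 else 0)) := by
  have hset : {p : V × V | p.1 ∈ ({a, a', b, b'} : Set V) ∧ p.2 ∈ ({a, a', b, b'} : Set V)
      ∧ Γ.adj p.1 p.2} =
      ↑(({(a, b), (a, b'), (a', b), (a', b')} : Finset (V × V)).filter
        (fun p => Γ.adj p.1 p.2)) := by
    ext ⟨x, y⟩
    simp only [Set.mem_setOf_eq, Finset.coe_filter, Finset.mem_insert,
      Finset.mem_singleton, Prod.mk.injEq]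
    constructor
    · rintro ⟨hx, hy, hadj⟩
      have hxl := (Γ.adj_dom x y hadj).1
      have hyr := (Γ.adj_dom x y hadj).2
      have hx' : x = a ∨ x = a' := by
        rcases hx with rfl | rfl | rfl | rfl
        · exact Or.inl rfl
        · exact Or.inr rfl
        · exact absurd hxl (Γ.mem_right_iff.mp hb)
        · exact absurd hxl (Γ.mem_right_iff.mp hb')
      have hy' : y = b ∨ y = b' := by
        rcases hy with rfl | rfl | rfl | rfl
        · exact absurd hyr (fun h => Γ.not_both ha h)
        · exact absurd hyr (fun h => Γ.not_both ha' h)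
        · exact Or.inl rfl
        · exact Or.inr rfl
      refine ⟨?_, hadj⟩
      rcases hx' with rfl | rfl <;> rcases hy' with rfl | rfl <;> simp
    · rintro ⟨h, hadj⟩
      refine ⟨?_, ?_, hadj⟩ <;>
        rcases h with ⟨rfl, rfl⟩ | ⟨rfl, rfl⟩ | ⟨rfl, rfl⟩ | ⟨rfl, rfl⟩ <;> simp
  rw [edgeCount, hset, Set.ncard_coe_finset, Finset.card_filter]
  rw [Finset.sum_insert (by simp [Prod.ext_iff, haa, hbb]),
    Finset.sum_insert (by simp [Prod.ext_iff, haa, hbb]),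
    Finset.sum_insert (by simp [Prod.ext_iff, haa, hbb]),
    Finset.sum_singleton]
  ac_rfl

lemma even_four_iff (P Q R S : Prop) :
    (Even (((if P then 1 else 0) + (if Q then 1 else 0)) +
      ((if R then 1 else 0) + (if S then 1 else 0)) : ℕ)) ↔ ((P ↔ Q) ↔ (R ↔ S)) := by
  by_cases hP : P <;> by_cases hQ : Q <;> by_cases hR : R <;> by_cases hS : S <;>
    simp [hP, hQ, hR, hS] <;> decide

lemma quad_isMN {a a' b b' : V}
    (ha : a ∈ Γ.left) (ha' : a' ∈ Γ.left) (hb : b ∈ Γ.right) (hb' : b' ∈ Γ.right)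
    (haa : a ≠ a') (hbb : b ≠ b') :
    Γ.IsMNSubgraph {a, a', b, b'} 2 2 := by
  have hL : ({a, a', b, b'} : Set V) ∩ Γ.left = {a, a'} := by
    ext x; simp only [Set.mem_inter_iff, Set.mem_insert_iff, Set.mem_singleton_iff]
    constructor
    · rintro ⟨(rfl | rfl | rfl | rfl), hx⟩
      · exact Or.inl rfl
      · exact Or.inr rfl
      · exact absurd hx (Γ.mem_right_iff.mp hb)
      · exact absurd hx (Γ.mem_right_iff.mp hb')
    · rintro (rfl | rfl)
      · exact ⟨Or.inl rfl, ha⟩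
      · exact ⟨Or.inr (Or.inl rfl), ha'⟩
  have hR : ({a, a', b, b'} : Set V) ∩ Γ.right = {b, b'} := by
    ext x; simp only [Set.mem_inter_iff, Set.mem_insert_iff, Set.mem_singleton_iff]
    constructor
    · rintro ⟨(rfl | rfl | rfl | rfl), hx⟩
      · exact absurd hx (fun h => Γ.not_both ha h)
      · exact absurd hx (fun h => Γ.not_both ha' h)
      · exact Or.inl rfl
      · exact Or.inr rfl
    · rintro (rfl | rfl)
      · exact ⟨Or.inr (Or.inr (Or.inl rfl)), hb⟩
      · exact ⟨Or.inr (Or.inr (Or.inr rfl)), hb'⟩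
  exact ⟨Set.toFinite _, by rw [hL]; exact Set.ncard_pair haa,
    by rw [hR]; exact Set.ncard_pair hbb⟩

lemma parity_quad (σ : Equiv.Perm V) (hσ : σ ∈ Γ.symLR) {a a' b b' : V}
    (ha : a ∈ Γ.left) (ha' : a' ∈ Γ.left) (hb : b ∈ Γ.right) (hb' : b' ∈ Γ.right)
    (haa : a ≠ a') (hbb : b ≠ b') :
    Γ.PreservesParityOn (⇑σ) {a, a', b, b'} ↔
      (((Γ.adj a b ↔ Γ.adj a b') ↔ (Γ.adj a' b ↔ Γ.adj a' b')) ↔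
       ((Γ.adj (σ a) (σ b) ↔ Γ.adj (σ a) (σ b')) ↔
        (Γ.adj (σ a') (σ b) ↔ Γ.adj (σ a') (σ b')))) := by
  have himg : (⇑σ) '' {a, a', b, b'} = {σ a, σ a', σ b, σ b'} := by
    simp [Set.image_insert_eq]
  rw [PreservesParityOn, himg,
    Γ.edgeCount_quad ha ha' hb hb' haa hbb,
    Γ.edgeCount_quad ((hσ.1 a).mpr ha) ((hσ.1 a').mpr ha') ((hσ.2 b).mpr hb)
      ((hσ.2 b').mpr hb') (fun h => haa (σ.injective h)) (fun h => hbb (σ.injective h)),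
    even_four_iff, even_four_iff]

end BipartiteGraph
namespace BipartiteGraph

open scoped Classical

variable {V : Type*} (Γ : BipartiteGraph V) (B : V → V → Prop)

/-- A good partial isomorphism from `(V, Γ.adj)` to `(V, B)`. -/
def Good (dom : Finset V) (f : V → V) : Prop :=
  Set.InjOn f ↑dom ∧ (∀ x ∈ dom, (x ∈ Γ.left ↔ f x ∈ Γ.left)) ∧
  ∀ a ∈ dom, ∀ b ∈ dom, a ∈ Γ.left → b ∈ Γ.right → (B (f a) (f b) ↔ Γ.adj a b)

variable {Γ B}

lemma Good.rightIff {dom : Finset V} {f : V → V} (hg : Good Γ B dom f) :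
    ∀ x ∈ dom, (x ∈ Γ.right ↔ f x ∈ Γ.right) := by
  intro x hx
  rw [Γ.mem_right_iff, Γ.mem_right_iff, not_iff_not]
  exact hg.2.1 x hx

/-- Extension hypotheses for the target relation `B`. -/
def BExt (Γ : BipartiteGraph V) (B : V → V → Prop) : Prop :=
  (∀ Y X₁ X₂ : Finset V, ↑X₁ ⊆ Γ.left → ↑X₂ ⊆ Γ.left → Disjoint X₁ X₂ →
    ∃ v ∈ Γ.right, v ∉ Y ∧ (∀ x ∈ X₁, B x v) ∧ (∀ x ∈ X₂, ¬ B x v)) ∧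
  (∀ Y X₁ X₂ : Finset V, ↑X₁ ⊆ Γ.right → ↑X₂ ⊆ Γ.right → Disjoint X₁ X₂ →
    ∃ v ∈ Γ.left, v ∉ Y ∧ (∀ x ∈ X₁, B v x) ∧ (∀ x ∈ X₂, ¬ B v x))

lemma Good.insert_point {dom : Finset V} {f : V → V} (hg : Good Γ B dom f) {x y : V}
    (hx : x ∉ dom) (hyIm : y ∉ dom.image f) (hside : x ∈ Γ.left ↔ y ∈ Γ.left)
    (hcrossL : ∀ b ∈ dom, x ∈ Γ.left → b ∈ Γ.right → (B y (f b) ↔ Γ.adj x b))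
    (hcrossR : ∀ b ∈ dom, b ∈ Γ.left → x ∈ Γ.right → (B (f b) y ↔ Γ.adj b x)) :
    Good Γ B (insert x dom) (Function.update f x y) := by
  have key : ∀ z ∈ dom, Function.update f x y z = f z := fun z hz =>
    Function.update_of_ne (fun h : z = x => hx (h ▸ hz)) y f
  refine ⟨?_, ?_, ?_⟩
  · intro u hu w hw huw
    simp only [Finset.coe_insert, Set.mem_insert_iff, Finset.mem_coe] at hu hw
    rcases hu with hux | hu <;> rcases hw with hwx | hw
    · rw [hux, hwx]
    · exfalso; rw [hux, Function.update_self, key w hw] at huw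
      exact hyIm (huw ▸ Finset.mem_image_of_mem f hw)
    · exfalso; rw [hwx, Function.update_self, key u hu] at huw
      exact hyIm (huw ▸ Finset.mem_image_of_mem f hu)
    · rw [key u hu, key w hw] at huw; exact hg.1 hu hw huw
  · intro z hz
    rcases Finset.mem_insert.mp hz with hzx | hz
    · rw [hzx, Function.update_self]; exact hside
    · rw [key z hz]; exact hg.2.1 z hz
  · intro u hu w hw hul hwr
    rcases Finset.mem_insert.mp hu with hux | hu <;>
      rcases Finset.mem_insert.mp hw with hwx | hw
    · exfalso; rw [hux] at hul; rw [hwx] at hwr; exact Γ.not_both hul hwr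
    · rw [hux] at hul ⊢; rw [Function.update_self, key w hw]
      exact hcrossL w hw hul hwr
    · rw [hwx] at hwr ⊢; rw [Function.update_self, key u hu]
      exact hcrossR u hu hul hwr
    · rw [key u hu, key w hw]; exact hg.2.2 u hu w hw hul hwr

lemma Good.extend_dom (hB : BExt Γ B) {dom : Finset V} {f : V → V}
    (hg : Good Γ B dom f) (x : V) :
    ∃ f', Good Γ B (insert x dom) f' ∧ ∀ z ∈ dom, f' z = f z := by
  by_cases hx : x ∈ dom
  · exact ⟨f, by rwa [Finset.insert_eq_self.mpr hx], fun z _ => rfl⟩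
  have key : ∀ y : V, ∀ z ∈ dom, Function.update f x y z = f z := fun y z hz =>
    Function.update_of_ne (fun h : z = x => hx (h ▸ hz)) y f
  rcases Γ.mem_lr x with hxl | hxr
  · obtain ⟨y, hyL, hyY, hp1, hp2⟩ := hB.2 (dom.image f)
      ((dom.filter (fun b => b ∈ Γ.right ∧ Γ.adj x b)).image f)
      ((dom.filter (fun b => b ∈ Γ.right ∧ ¬ Γ.adj x b)).image f)
      (by intro z hz
          simp only [Finset.coe_image, Set.mem_image, Finset.mem_coe,
            Finset.mem_filter] at hz
          obtain ⟨b, ⟨hbd, hbr, _⟩, rfl⟩ := hz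
          exact (hg.rightIff b hbd).mp hbr)
      (by intro z hz
          simp only [Finset.coe_image, Set.mem_image, Finset.mem_coe,
            Finset.mem_filter] at hz
          obtain ⟨b, ⟨hbd, hbr, _⟩, rfl⟩ := hz
          exact (hg.rightIff b hbd).mp hbr)
      (by rw [Finset.disjoint_left]
          rintro z hz1 hz2
          simp only [Finset.mem_image, Finset.mem_filter] at hz1 hz2
          obtain ⟨b, ⟨hbd, _, hadj⟩, rfl⟩ := hz1
          obtain ⟨b', ⟨hbd', _, hnadj⟩, hfe⟩ := hz2
          exact hnadj (hg.1 hbd' hbd hfe ▸ hadj))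
    refine ⟨Function.update f x y, hg.insert_point hx hyY
      ⟨fun _ => hyL, fun _ => hxl⟩ ?_ ?_, key y⟩
    · intro b hb _ hbr
      by_cases hadj : Γ.adj x b
      · simp only [hadj, iff_true]
        exact hp1 (f b) (Finset.mem_image_of_mem f (Finset.mem_filter.mpr ⟨hb, hbr, hadj⟩))
      · simp only [hadj, iff_false]
        exact hp2 (f b) (Finset.mem_image_of_mem f (Finset.mem_filter.mpr ⟨hb, hbr, hadj⟩))
    · intro b hb _ hxr
      exact (Γ.not_both hxl hxr).elim
  · obtain ⟨y, hyR, hyY, hp1, hp2⟩ := hB.1 (dom.image f)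
      ((dom.filter (fun a => a ∈ Γ.left ∧ Γ.adj a x)).image f)
      ((dom.filter (fun a => a ∈ Γ.left ∧ ¬ Γ.adj a x)).image f)
      (by intro z hz
          simp only [Finset.coe_image, Set.mem_image, Finset.mem_coe,
            Finset.mem_filter] at hz
          obtain ⟨a, ⟨had, hal, _⟩, rfl⟩ := hz
          exact (hg.2.1 a had).mp hal)
      (by intro z hz
          simp only [Finset.coe_image, Set.mem_image, Finset.mem_coe,
            Finset.mem_filter] at hz
          obtain ⟨a, ⟨had, hal, _⟩, rfl⟩ := hz
          exact (hg.2.1 a had).mp hal)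
      (by rw [Finset.disjoint_left]
          rintro z hz1 hz2
          simp only [Finset.mem_image, Finset.mem_filter] at hz1 hz2
          obtain ⟨a, ⟨had, _, hadj⟩, rfl⟩ := hz1
          obtain ⟨a', ⟨had', _, hnadj⟩, hfe⟩ := hz2
          exact hnadj (hg.1 had' had hfe ▸ hadj))
    refine ⟨Function.update f x y, hg.insert_point hx hyY
      ⟨fun h => absurd h (Γ.mem_right_iff.mp hxr),
        fun h => absurd h (Γ.mem_right_iff.mp hyR)⟩ ?_ ?_, key y⟩
    · intro b hb hxl _
      exact (Γ.not_both hxl hxr).elim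
    · intro a ha hal _
      by_cases hadj : Γ.adj a x
      · simp only [hadj, iff_true]
        exact hp1 (f a) (Finset.mem_image_of_mem f (Finset.mem_filter.mpr ⟨ha, hal, hadj⟩))
      · simp only [hadj, iff_false]
        exact hp2 (f a) (Finset.mem_image_of_mem f (Finset.mem_filter.mpr ⟨ha, hal, hadj⟩))

lemma Good.extend_ran (hΓ : Γ.IsRandom) {dom : Finset V} {f : V → V}
    (hg : Good Γ B dom f) (y : V) :
    ∃ dom' f', Good Γ B dom' f' ∧ dom ⊆ dom' ∧ (∀ z ∈ dom, f' z = f z) ∧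
      y ∈ dom'.image f' := by
  by_cases hy : y ∈ dom.image f
  · exact ⟨dom, f, hg, Finset.Subset.refl _, fun z _ => rfl, hy⟩
  rcases Γ.mem_lr y with hyl | hyr
  · obtain ⟨x, hxL, hxd, hp1, hp2⟩ := Γ.ext_right_avoid hΓ dom
      (dom.filter (fun b => b ∈ Γ.right ∧ B y (f b)))
      (dom.filter (fun b => b ∈ Γ.right ∧ ¬ B y (f b)))
      (by intro z hz
          simp only [Finset.coe_filter, Set.mem_setOf_eq] at hz
          exact hz.2.1)
      (by intro z hz
          simp only [Finset.coe_filter, Set.mem_setOf_eq] at hz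
          exact hz.2.1)
      (by rw [Finset.disjoint_left]
          rintro z hz1 hz2
          simp only [Finset.mem_filter] at hz1 hz2
          exact hz2.2.2 hz1.2.2)
    have key : ∀ z ∈ dom, Function.update f x y z = f z := fun z hz =>
      Function.update_of_ne (fun h : z = x => hxd (h ▸ hz)) y f
    refine ⟨insert x dom, Function.update f x y,
      hg.insert_point hxd hy ⟨fun _ => hyl, fun _ => hxL⟩ ?_ ?_,
      Finset.subset_insert x dom, key, ?_⟩
    · intro b hb _ hbr
      constructor
      · intro hB'
        exact hp1 b (Finset.mem_filter.mpr ⟨hb, hbr, hB'⟩)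
      · intro hadj
        by_contra hB'
        exact hp2 b (Finset.mem_filter.mpr ⟨hb, hbr, hB'⟩) hadj
    · intro b hb _ hxr
      exact (Γ.not_both hxL hxr).elim
    · exact Finset.mem_image.mpr ⟨x, Finset.mem_insert_self x dom,
        Function.update_self x y f⟩
  · obtain ⟨x, hxR, hxd, hp1, hp2⟩ := Γ.ext_left_avoid hΓ dom
      (dom.filter (fun a => a ∈ Γ.left ∧ B (f a) y))
      (dom.filter (fun a => a ∈ Γ.left ∧ ¬ B (f a) y))
      (by intro z hz
          simp only [Finset.coe_filter, Set.mem_setOf_eq] at hz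
          exact hz.2.1)
      (by intro z hz
          simp only [Finset.coe_filter, Set.mem_setOf_eq] at hz
          exact hz.2.1)
      (by rw [Finset.disjoint_left]
          rintro z hz1 hz2
          simp only [Finset.mem_filter] at hz1 hz2
          exact hz2.2.2 hz1.2.2)
    have key : ∀ z ∈ dom, Function.update f x y z = f z := fun z hz =>
      Function.update_of_ne (fun h : z = x => hxd (h ▸ hz)) y f
    refine ⟨insert x dom, Function.update f x y,
      hg.insert_point hxd hy ⟨fun h => absurd h (Γ.mem_right_iff.mp hxR),
        fun h => absurd h (Γ.mem_right_iff.mp hyr)⟩ ?_ ?_,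
      Finset.subset_insert x dom, key, ?_⟩
    · intro b hb hxl _
      exact (Γ.not_both hxl hxR).elim
    · intro a ha hal _
      constructor
      · intro hB'
        exact hp1 a (Finset.mem_filter.mpr ⟨ha, hal, hB'⟩)
      · intro hadj
        by_contra hB'
        exact hp2 a (Finset.mem_filter.mpr ⟨ha, hal, hB'⟩) hadj
    · exact Finset.mem_image.mpr ⟨x, Finset.mem_insert_self x dom,
        Function.update_self x y f⟩

end BipartiteGraph
namespace BipartiteGraph

variable {V : Type*} {Γ : BipartiteGraph V} {B : V → V → Prop}

lemma back_forth (hΓ : Γ.IsRandom) (hB : BExt Γ B)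
    (dom₀ : Finset V) (f₀ : V → V) (hg₀ : Good Γ B dom₀ f₀) :
    ∃ σ : Equiv.Perm V, σ ∈ Γ.symLR ∧ (∀ x ∈ dom₀, σ x = f₀ x) ∧
      ∀ a ∈ Γ.left, ∀ b ∈ Γ.right, (B (σ a) (σ b) ↔ Γ.adj a b) := by
  classical
  have hstep : ∀ (d : Finset V) (f : V → V), Good Γ B d f → ∀ v : V,
      ∃ p : Finset V × (V → V), Good Γ B p.1 p.2 ∧ d ⊆ p.1 ∧
        (∀ z ∈ d, p.2 z = f z) ∧ v ∈ p.1 ∧ v ∈ p.1.image p.2 := by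
    intro d f hg v
    obtain ⟨f₁, hg₁, hagree₁⟩ := hg.extend_dom hB v
    obtain ⟨d₂, f₂, hg₂, hsub₂, hagree₂, himg₂⟩ := hg₁.extend_ran hΓ v
    refine ⟨(d₂, f₂), hg₂, ?_, ?_, hsub₂ (Finset.mem_insert_self v d), himg₂⟩
    · exact (Finset.subset_insert v d).trans hsub₂
    · intro z hz
      show f₂ z = f z
      rw [hagree₂ z (Finset.mem_insert_of_mem hz), hagree₁ z hz]
  have : Nonempty V := ⟨Γ.left_nonempty.choose⟩
  have : Countable V := hΓ.countable
  obtain ⟨e, he⟩ := exists_surjective_nat V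
  choose step hstep1 hstep2 hstep3 hstep4 hstep5 using hstep
  let seq : ℕ → {p : Finset V × (V → V) // Good Γ B p.1 p.2} := fun n =>
    Nat.rec ⟨(dom₀, f₀), hg₀⟩
      (fun n p => ⟨step p.1.1 p.1.2 p.2 (e n), hstep1 p.1.1 p.1.2 p.2 (e n)⟩) n
  have hseqS : ∀ n : ℕ, (seq (n + 1)).1 = step (seq n).1.1 (seq n).1.2 (seq n).2 (e n) :=
    fun n => rfl
  have hmono : ∀ m n : ℕ, m ≤ n → (seq m).1.1 ⊆ (seq n).1.1 ∧
      ∀ z ∈ (seq m).1.1, (seq n).1.2 z = (seq m).1.2 z := by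
    intro m n hmn
    induction n, hmn using Nat.le_induction with
    | base => exact ⟨Finset.Subset.refl _, fun z _ => rfl⟩
    | succ n hmn ih =>
      have h2 := hstep2 (seq n).1.1 (seq n).1.2 (seq n).2 (e n)
      have h3 := hstep3 (seq n).1.1 (seq n).1.2 (seq n).2 (e n)
      rw [← hseqS n] at h2 h3
      refine ⟨ih.1.trans h2, fun z hz => ?_⟩
      rw [h3 z (ih.1 hz), ih.2 z hz]
  let idx : V → ℕ := fun v => (he v).choose
  have hidx : ∀ v : V, e (idx v) = v := fun v => (he v).choose_spec
  have hdom : ∀ v : V, v ∈ (seq (idx v + 1)).1.1 := by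
    intro v
    have := hstep4 (seq (idx v)).1.1 (seq (idx v)).1.2 (seq (idx v)).2 (e (idx v))
    rw [← hseqS (idx v), hidx v] at this
    exact this
  let F : V → V := fun v => (seq (idx v + 1)).1.2 v
  have hF : ∀ (n : ℕ) (v : V), v ∈ (seq n).1.1 → F v = (seq n).1.2 v := by
    intro n v hv
    have h1 := (hmono n (max n (idx v + 1)) (le_max_left _ _)).2 v hv
    have h2 := (hmono (idx v + 1) (max n (idx v + 1)) (le_max_right _ _)).2 v (hdom v)
    show (seq (idx v + 1)).1.2 v = (seq n).1.2 v
    rw [← h1, ← h2]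
  have hinj : Function.Injective F := by
    intro u w huw
    set n := max (idx u + 1) (idx w + 1) with hn
    have hu : u ∈ (seq n).1.1 := (hmono _ n (le_max_left _ _)).1 (hdom u)
    have hw : w ∈ (seq n).1.1 := (hmono _ n (le_max_right _ _)).1 (hdom w)
    rw [hF n u hu, hF n w hw] at huw
    exact (seq n).2.1 hu hw huw
  have hsurj : Function.Surjective F := by
    intro y
    have := hstep5 (seq (idx y)).1.1 (seq (idx y)).1.2 (seq (idx y)).2 (e (idx y))
    rw [← hseqS (idx y), hidx y] at this
    obtain ⟨x, hx, hfx⟩ := Finset.mem_image.mp this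
    exact ⟨x, by rw [hF (idx y + 1) x hx]; exact hfx⟩
  refine ⟨Equiv.ofBijective F ⟨hinj, hsurj⟩, ⟨?_, ?_⟩, ?_, ?_⟩
  · intro v
    show F v ∈ Γ.left ↔ v ∈ Γ.left
    exact ((seq (idx v + 1)).2.2.1 v (hdom v)).symm
  · intro v
    show F v ∈ Γ.right ↔ v ∈ Γ.right
    rw [Γ.mem_right_iff, Γ.mem_right_iff, not_iff_not]
    exact ((seq (idx v + 1)).2.2.1 v (hdom v)).symm
  · intro x hx
    show F x = f₀ x
    exact hF 0 x hx
  · intro a ha b hb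
    set n := max (idx a + 1) (idx b + 1) with hn
    have hna : a ∈ (seq n).1.1 := (hmono _ n (le_max_left _ _)).1 (hdom a)
    have hnb : b ∈ (seq n).1.1 := (hmono _ n (le_max_right _ _)).1 (hdom b)
    show B (F a) (F b) ↔ Γ.adj a b
    rw [hF n a hna, hF n b hnb]
    exact (seq n).2.2.2 a hna b hnb ha hb

end BipartiteGraph
namespace BipartiteGraph

open scoped Classical

variable {V : Type*} (Γ : BipartiteGraph V)

lemma bext_adj (hΓ : Γ.IsRandom) : BExt Γ Γ.adj :=
  ⟨fun Y => Γ.ext_left_avoid hΓ Y, fun Y => Γ.ext_right_avoid hΓ Y⟩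

lemma isMN_image (σ : Equiv.Perm V) (hσ : σ ∈ Γ.symLR) {S : Set V}
    (hS : Γ.IsMNSubgraph S 2 2) : Γ.IsMNSubgraph (⇑σ '' S) 2 2 := by
  have hL : (⇑σ '' S) ∩ Γ.left = ⇑σ '' (S ∩ Γ.left) := by
    ext z; constructor
    · rintro ⟨⟨x, hx, rfl⟩, hzL⟩
      exact ⟨x, ⟨hx, (hσ.1 x).mp hzL⟩, rfl⟩
    · rintro ⟨x, ⟨hx, hxL⟩, rfl⟩
      exact ⟨⟨x, hx, rfl⟩, (hσ.1 x).mpr hxL⟩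
  have hR : (⇑σ '' S) ∩ Γ.right = ⇑σ '' (S ∩ Γ.right) := by
    ext z; constructor
    · rintro ⟨⟨x, hx, rfl⟩, hzR⟩
      exact ⟨x, ⟨hx, (hσ.2 x).mp hzR⟩, rfl⟩
    · rintro ⟨x, ⟨hx, hxR⟩, rfl⟩
      exact ⟨⟨x, hx, rfl⟩, (hσ.2 x).mpr hxR⟩
  exact ⟨hS.1.image _, by rw [hL, Set.ncard_image_of_injective _ σ.injective]; exact hS.2.1,
    by rw [hR, Set.ncard_image_of_injective _ σ.injective]; exact hS.2.2⟩

lemma parity_of_switchlike (σ : Equiv.Perm V) (hσ : σ ∈ Γ.symLR) (A : Set V)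
    (h : ∀ a ∈ Γ.left, ∀ b ∈ Γ.right,
      ((Γ.adj a b ↔ Γ.adj (σ a) (σ b)) ↔ (a ∈ A ↔ b ∈ A))) :
    ∀ S : Set V, Γ.IsMNSubgraph S 2 2 → Γ.PreservesParityOn (⇑σ) S := by
  intro S hS
  obtain ⟨a, a', haa, hL⟩ := Set.ncard_eq_two.mp hS.2.1
  obtain ⟨b, b', hbb, hR⟩ := Set.ncard_eq_two.mp hS.2.2
  have haS : a ∈ S ∩ Γ.left := by rw [hL]; exact Or.inl rfl
  have haS' : a' ∈ S ∩ Γ.left := by rw [hL]; exact Or.inr rfl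
  have hbS : b ∈ S ∩ Γ.right := by rw [hR]; exact Or.inl rfl
  have hbS' : b' ∈ S ∩ Γ.right := by rw [hR]; exact Or.inr rfl
  have hSeq : S = {a, a', b, b'} := by
    ext x; constructor
    · intro hx
      rcases Γ.mem_lr x with hxl | hxr
      · have : x ∈ S ∩ Γ.left := ⟨hx, hxl⟩
        rw [hL] at this
        rcases this with h' | h'
        · exact Or.inl h'
        · exact Or.inr (Or.inl h')
      · have : x ∈ S ∩ Γ.right := ⟨hx, hxr⟩
        rw [hR] at this
        rcases this with h' | h'
        · exact Or.inr (Or.inr (Or.inl h'))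
        · exact Or.inr (Or.inr (Or.inr h'))
    · rintro (rfl | rfl | rfl | rfl)
      exacts [haS.1, haS'.1, hbS.1, hbS'.1]
  rw [hSeq, Γ.parity_quad σ hσ haS.2 haS'.2 hbS.2 hbS'.2 haa hbb]
  have h11 := h a haS.2 b hbS.2
  have h12 := h a haS.2 b' hbS'.2
  have h21 := h a' haS'.2 b hbS.2
  have h22 := h a' haS'.2 b' hbS'.2
  exact iff_rect' h11 h12 h21 h22

lemma exists_aut_extend (hΓ : Γ.IsRandom) (dom : Finset V) (f : V → V)
    (hg : Good Γ Γ.adj dom f) :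
    ∃ α : Equiv.Perm V, α ∈ Γ.autGroup ∧ ∀ x ∈ dom, α x = f x := by
  obtain ⟨σ, hσ, hagree, hcross⟩ := back_forth hΓ (Γ.bext_adj hΓ) dom f hg
  refine ⟨σ, ⟨hσ, fun a b => ?_⟩, hagree⟩
  constructor
  · intro hadj
    obtain ⟨hal, hbr⟩ := Γ.adj_dom a b hadj
    exact (hcross a hal b hbr).mpr hadj
  · intro hadj
    obtain ⟨hal, hbr⟩ := Γ.adj_dom _ _ hadj
    exact (hcross a ((hσ.1 a).mp hal) b ((hσ.2 b).mp hbr)).mp hadj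

lemma exists_switch_single (hΓ : Γ.IsRandom) (w : V) :
    ∃ s : Equiv.Perm V, Γ.IsSwitch s {w} := by
  classical
  set B : V → V → Prop :=
    fun x y => x ∈ Γ.left ∧ y ∈ Γ.right ∧ ¬(Γ.adj x y ↔ (x = w ∨ y = w)) with hBdef
  have hBext : BExt Γ B := by
    constructor
    · intro Y X₁ X₂ h1 h2 hd
      rcases Γ.mem_lr w with hwL | hwR
      · by_cases hw1 : w ∈ X₁
        · obtain ⟨v, hvR, hvY, hp1, hp2⟩ := Γ.ext_left_avoid hΓ Y (X₁.erase w)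
            (insert w X₂)
            (fun z hz => h1 (Finset.mem_coe.mpr
              (Finset.mem_of_mem_erase (Finset.mem_coe.mp hz))))
            (by push_cast; exact Set.insert_subset hwL h2)
            (by rw [Finset.disjoint_left]
                intro z hz1 hz2
                have hz1' := Finset.mem_of_mem_erase hz1
                rcases Finset.mem_insert.mp hz2 with rfl | hz2'
                · exact (Finset.mem_erase.mp hz1).1 rfl
                · exact Finset.disjoint_left.mp hd hz1' hz2')
          have hvw : v ≠ w := fun h => Γ.not_both hwL (h ▸ hvR)
          refine ⟨v, hvR, hvY, ?_, ?_⟩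
          · intro x hx
            refine ⟨h1 hx, hvR, ?_⟩
            by_cases hxw : x = w
            · subst hxw
              simp only [true_or, iff_true]
              exact hp2 x (Finset.mem_insert_self x X₂)
            · simp only [hxw, hvw, or_self, iff_false, not_not]
              exact hp1 x (Finset.mem_erase.mpr ⟨hxw, hx⟩)
          · intro x hx hBx
            have hxw : x ≠ w := fun h => Finset.disjoint_left.mp hd (h ▸ hw1) hx
            have := hBx.2.2
            simp only [hxw, hvw, or_self, iff_false, not_not] at this
            exact hp2 x (Finset.mem_insert_of_mem hx) this
        · by_cases hw2 : w ∈ X₂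
          · obtain ⟨v, hvR, hvY, hp1, hp2⟩ := Γ.ext_left_avoid hΓ Y (insert w X₁)
              (X₂.erase w)
              (by push_cast; exact Set.insert_subset hwL h1)
              (fun z hz => h2 (Finset.mem_coe.mpr
                (Finset.mem_of_mem_erase (Finset.mem_coe.mp hz))))
              (by rw [Finset.disjoint_left]
                  intro z hz1 hz2
                  rcases Finset.mem_insert.mp hz1 with rfl | hz1'
                  · exact (Finset.mem_erase.mp hz2).1 rfl
                  · exact Finset.disjoint_left.mp hd hz1' (Finset.mem_of_mem_erase hz2))
            have hvw : v ≠ w := fun h => Γ.not_both hwL (h ▸ hvR)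
            refine ⟨v, hvR, hvY, ?_, ?_⟩
            · intro x hx
              have hxw : x ≠ w := fun h => hw1 (h ▸ hx)
              refine ⟨h1 hx, hvR, ?_⟩
              simp only [hxw, hvw, or_self, iff_false, not_not]
              exact hp1 x (Finset.mem_insert_of_mem hx)
            · intro x hx hBx
              have := hBx.2.2
              by_cases hxw : x = w
              · subst hxw
                simp only [true_or, iff_true] at this
                exact this (hp1 x (Finset.mem_insert_self x X₁))
              · simp only [hxw, hvw, or_self, iff_false, not_not] at this
                exact hp2 x (Finset.mem_erase.mpr ⟨hxw, hx⟩) this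
          · obtain ⟨v, hvR, hvY, hp1, hp2⟩ := Γ.ext_left_avoid hΓ Y X₁ X₂ h1 h2 hd
            have hvw : v ≠ w := fun h => Γ.not_both hwL (h ▸ hvR)
            refine ⟨v, hvR, hvY, ?_, ?_⟩
            · intro x hx
              have hxw : x ≠ w := fun h => hw1 (h ▸ hx)
              refine ⟨h1 hx, hvR, ?_⟩
              simp only [hxw, hvw, or_self, iff_false, not_not]
              exact hp1 x hx
            · intro x hx hBx
              have hxw : x ≠ w := fun h => hw2 (h ▸ hx)
              have := hBx.2.2
              simp only [hxw, hvw, or_self, iff_false, not_not] at this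
              exact hp2 x hx this
      · obtain ⟨v, hvR, hvY, hp1, hp2⟩ := Γ.ext_left_avoid hΓ (insert w Y) X₁ X₂ h1 h2 hd
        have hvw : v ≠ w := fun h => hvY (h ▸ Finset.mem_insert_self w Y)
        refine ⟨v, hvR, fun h => hvY (Finset.mem_insert_of_mem h), ?_, ?_⟩
        · intro x hx
          have hxw : x ≠ w := fun h => Γ.not_both (h1 hx) (h ▸ hwR)
          refine ⟨h1 hx, hvR, ?_⟩
          simp only [hxw, hvw, or_self, iff_false, not_not]
          exact hp1 x hx
        · intro x hx hBx
          have hxw : x ≠ w := fun h => Γ.not_both (h2 hx) (h ▸ hwR)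
          have := hBx.2.2
          simp only [hxw, hvw, or_self, iff_false, not_not] at this
          exact hp2 x hx this
    · intro Y X₁ X₂ h1 h2 hd
      rcases Γ.mem_lr w with hwL | hwR
      · obtain ⟨v, hvL, hvY, hp1, hp2⟩ := Γ.ext_right_avoid hΓ (insert w Y) X₁ X₂ h1 h2 hd
        have hvw : v ≠ w := fun h => hvY (h ▸ Finset.mem_insert_self w Y)
        refine ⟨v, hvL, fun h => hvY (Finset.mem_insert_of_mem h), ?_, ?_⟩
        · intro x hx
          have hxw : x ≠ w := fun h => Γ.not_both hwL (h ▸ h1 hx)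
          refine ⟨hvL, h1 hx, ?_⟩
          simp only [hxw, hvw, or_self, iff_false, not_not]
          exact hp1 x hx
        · intro x hx hBx
          have hxw : x ≠ w := fun h => Γ.not_both hwL (h ▸ h2 hx)
          have := hBx.2.2
          simp only [hxw, hvw, or_self, iff_false, not_not] at this
          exact hp2 x hx this
      · by_cases hw1 : w ∈ X₁
        · obtain ⟨v, hvL, hvY, hp1, hp2⟩ := Γ.ext_right_avoid hΓ Y (X₁.erase w)
            (insert w X₂)
            (fun z hz => h1 (Finset.mem_of_mem_erase (by exact_mod_cast hz)))
            (by push_cast; exact Set.insert_subset hwR h2)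
            (by rw [Finset.disjoint_left]
                intro z hz1 hz2
                rcases Finset.mem_insert.mp hz2 with rfl | hz2'
                · exact (Finset.mem_erase.mp hz1).1 rfl
                · exact Finset.disjoint_left.mp hd (Finset.mem_of_mem_erase hz1) hz2')
          have hvw : v ≠ w := fun h => Γ.not_both (h ▸ hvL) hwR
          refine ⟨v, hvL, hvY, ?_, ?_⟩
          · intro x hx
            refine ⟨hvL, h1 hx, ?_⟩
            by_cases hxw : x = w
            · subst hxw
              simp only [or_true, iff_true]
              exact hp2 x (Finset.mem_insert_self x X₂)
            · simp only [hxw, hvw, or_self, iff_false, not_not]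
              exact hp1 x (Finset.mem_erase.mpr ⟨hxw, hx⟩)
          · intro x hx hBx
            have hxw : x ≠ w := fun h => Finset.disjoint_left.mp hd (h ▸ hw1) hx
            have := hBx.2.2
            simp only [hxw, hvw, or_self, iff_false, not_not] at this
            exact hp2 x (Finset.mem_insert_of_mem hx) this
        · by_cases hw2 : w ∈ X₂
          · obtain ⟨v, hvL, hvY, hp1, hp2⟩ := Γ.ext_right_avoid hΓ Y (insert w X₁)
              (X₂.erase w)
              (by push_cast; exact Set.insert_subset hwR h1)
              (fun z hz => h2 (Finset.mem_coe.mpr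
                (Finset.mem_of_mem_erase (Finset.mem_coe.mp hz))))
              (by rw [Finset.disjoint_left]
                  intro z hz1 hz2
                  rcases Finset.mem_insert.mp hz1 with rfl | hz1'
                  · exact (Finset.mem_erase.mp hz2).1 rfl
                  · exact Finset.disjoint_left.mp hd hz1' (Finset.mem_of_mem_erase hz2))
            have hvw : v ≠ w := fun h => Γ.not_both (h ▸ hvL) hwR
            refine ⟨v, hvL, hvY, ?_, ?_⟩
            · intro x hx
              have hxw : x ≠ w := fun h => hw1 (h ▸ hx)
              refine ⟨hvL, h1 hx, ?_⟩
              simp only [hxw, hvw, or_self, iff_false, not_not]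
              exact hp1 x (Finset.mem_insert_of_mem hx)
            · intro x hx hBx
              have := hBx.2.2
              by_cases hxw : x = w
              · subst hxw
                simp only [or_true, iff_true] at this
                exact this (hp1 x (Finset.mem_insert_self x X₁))
              · simp only [hxw, hvw, or_self, iff_false, not_not] at this
                exact hp2 x (Finset.mem_erase.mpr ⟨hxw, hx⟩) this
          · obtain ⟨v, hvL, hvY, hp1, hp2⟩ := Γ.ext_right_avoid hΓ Y X₁ X₂ h1 h2 hd
            have hvw : v ≠ w := fun h => Γ.not_both (h ▸ hvL) hwR
            refine ⟨v, hvL, hvY, ?_, ?_⟩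
            · intro x hx
              have hxw : x ≠ w := fun h => hw1 (h ▸ hx)
              refine ⟨hvL, h1 hx, ?_⟩
              simp only [hxw, hvw, or_self, iff_false, not_not]
              exact hp1 x hx
            · intro x hx hBx
              have hxw : x ≠ w := fun h => hw2 (h ▸ hx)
              have := hBx.2.2
              simp only [hxw, hvw, or_self, iff_false, not_not] at this
              exact hp2 x hx this
  have hg : Good Γ B {w} id := by
    refine ⟨fun u _ w' _ h => h, fun x _ => Iff.rfl, ?_⟩
    intro a ha b hb hal hbr
    rw [Finset.mem_singleton] at ha hb
    have hab : a = b := ha.trans hb.symm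
    rw [hab] at hal
    exact (Γ.not_both hal hbr).elim
  obtain ⟨σ, hσ, hagree, hcross⟩ := back_forth hΓ hBext {w} id hg
  have hww : σ w = w := hagree w (Finset.mem_singleton_self w)
  refine ⟨σ, hσ, ?_⟩
  intro a ha b hb
  have hab : a ≠ b := fun h => Γ.not_both ha (h ▸ hb)
  rw [ncard_pair_inter hab]
  have h := hcross a ha b hb
  have haL : σ a ∈ Γ.left := (hσ.1 a).mpr ha
  have hbR : σ b ∈ Γ.right := (hσ.2 b).mpr hb
  have h' : ¬(Γ.adj (σ a) (σ b) ↔ (σ a = w ∨ σ b = w)) ↔ Γ.adj a b :=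
    ⟨fun hc => h.mp ⟨haL, hbR, hc⟩, fun hadj => (h.mpr hadj).2.2⟩
  have ea : σ a = w ↔ a = w :=
    ⟨fun h => σ.injective (h.trans hww.symm), fun h => by rw [h, hww]⟩
  have eb : σ b = w ↔ b = w :=
    ⟨fun h => σ.injective (h.trans hww.symm), fun h => by rw [h, hww]⟩
  rw [ea, eb] at h'
  simp only [Set.mem_singleton_iff]
  have hnot : ¬(a = w ∧ b = w) := fun hc => hab (hc.1.trans hc.2.symm)
  exact single_switch_prop hnot h'

lemma exists_switch_finset (hΓ : Γ.IsRandom) (G : Subgroup (Equiv.Perm V))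
    (hgen : ((Γ.autGroup : Set (Equiv.Perm V)) ∪
      {g | ∃ i ∈ ({BSide.l, BSide.r} : Set BSide), ∃ v ∈ Γ.side i, Γ.IsSwitch g {v}})
        ⊆ ↑G) (D : Finset V) :
    ∃ τ ∈ G, Γ.IsSwitch τ ↑D := by
  classical
  have hsingle : ∀ u : V, ∃ s ∈ G, Γ.IsSwitch s {u} := by
    intro u
    obtain ⟨s, hs⟩ := Γ.exists_switch_single hΓ u
    refine ⟨s, hgen (Or.inr ?_), hs⟩
    rcases Γ.mem_lr u with huL | huR
    · exact ⟨BSide.l, Or.inl rfl, u, huL, hs⟩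
    · exact ⟨BSide.r, Or.inr rfl, u, huR, hs⟩
  induction D using Finset.induction with
  | empty =>
    refine ⟨1, one_mem G, one_mem Γ.symLR, ?_⟩
    intro a ha b hb
    simp only [Equiv.Perm.coe_one, id_eq, Finset.coe_empty, Set.inter_empty,
      Set.ncard_empty]
    simp
  | @insert v D hv ih =>
    obtain ⟨τ, hτG, hτsw⟩ := ih
    obtain ⟨s, hsG, hssw⟩ := hsingle (τ v)
    refine ⟨s * τ, mul_mem hsG hτG, mul_mem hssw.1 hτsw.1, ?_⟩
    intro a ha b hb
    have hab : a ≠ b := fun h => Γ.not_both ha (h ▸ hb)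
    rw [ncard_pair_inter hab]
    have h1 := hτsw.2 a ha b hb
    rw [ncard_pair_inter hab] at h1
    have htab : τ a ≠ τ b := fun h => hab (τ.injective h)
    have h2 := hssw.2 (τ a) ((hτsw.1.1 a).mpr ha) (τ b) ((hτsw.1.2 b).mpr hb)
    rw [ncard_pair_inter htab] at h2
    simp only [Set.mem_singleton_iff] at h2
    have ea : τ a = τ v ↔ a = v := ⟨fun h => τ.injective h, fun h => by rw [h]⟩
    have eb : τ b = τ v ↔ b = v := ⟨fun h => τ.injective h, fun h => by rw [h]⟩
    rw [ea, eb] at h2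
    simp only [Equiv.Perm.mul_apply, Finset.coe_insert, Set.mem_insert_iff,
      Finset.mem_coe]
    have hav : a = v → a ∉ D := fun h hd => hv (h ▸ hd)
    have hbv : b = v → b ∉ D := fun h hd => hv (h ▸ hd)
    simp only [Finset.mem_coe] at h1
    exact switch_comp_prop h1 h2 hav hbv

end BipartiteGraph
namespace BipartiteGraph

open scoped Classical

variable {V : Type*} (Γ : BipartiteGraph V)

/-- The subgroup of side-preserving permutations preserving parity in all
`(2×2)`-subgraphs. -/
def parityGroup : Subgroup (Equiv.Perm V) where
  carrier := {σ : Equiv.Perm V | σ ∈ Γ.symLR ∧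
    ∀ S : Set V, Γ.IsMNSubgraph S 2 2 → Γ.PreservesParityOn (⇑σ) S}
  one_mem' := ⟨one_mem _, fun S _ => by
    simp only [PreservesParityOn, Equiv.Perm.coe_one, Set.image_id]⟩
  mul_mem' := by
    rintro a b ⟨ha1, ha2⟩ ⟨hb1, hb2⟩
    refine ⟨mul_mem ha1 hb1, fun S hS => ?_⟩
    have himg : ⇑(a * b) '' S = ⇑a '' (⇑b '' S) := by
      rw [Equiv.Perm.coe_mul, Set.image_comp]
    rw [PreservesParityOn, himg]
    exact (hb2 S hS).trans (ha2 _ (Γ.isMN_image b hb1 hS))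
  inv_mem' := by
    rintro a ⟨ha1, ha2⟩
    refine ⟨inv_mem ha1, fun S hS => ?_⟩
    have hS' := Γ.isMN_image a⁻¹ (inv_mem ha1) hS
    have h := ha2 _ hS'
    have himg : ⇑a '' (⇑a⁻¹ '' S) = S := by
      rw [← Set.image_comp]
      have hcomp : (⇑a ∘ ⇑a⁻¹) = id := by
        funext x; exact Equiv.apply_symm_apply a x
      rw [hcomp, Set.image_id]
    rw [PreservesParityOn, himg] at h
    exact h.symm

lemma parityGroup_closed : IsClosedSubgroup Γ.parityGroup := by
  intro g hg
  have hsym : g ∈ Γ.symLR := by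
    constructor
    · intro v
      obtain ⟨h, hhG, hhv⟩ := hg {v}
      rw [← hhv v (Finset.mem_singleton_self v)]
      exact hhG.1.1 v
    · intro v
      obtain ⟨h, hhG, hhv⟩ := hg {v}
      rw [← hhv v (Finset.mem_singleton_self v)]
      exact hhG.1.2 v
  refine ⟨hsym, fun S hS => ?_⟩
  obtain ⟨h, hhG, hha⟩ := hg hS.1.toFinset
  have himg : ⇑h '' S = ⇑g '' S :=
    Set.image_congr (fun x hx => hha x (hS.1.mem_toFinset.mpr hx))
  have hp := hhG.2 S hS
  rwa [PreservesParityOn, himg] at hp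

lemma gens_subset_parity :
    ((Γ.autGroup : Set (Equiv.Perm V)) ∪
      {g | ∃ i ∈ ({BSide.l, BSide.r} : Set BSide), ∃ v ∈ Γ.side i, Γ.IsSwitch g {v}})
      ⊆ ↑Γ.parityGroup := by
  rintro g (hg | hg)
  · refine ⟨hg.1, Γ.parity_of_switchlike g hg.1 ∅ (fun a ha b hb => ?_)⟩
    simp only [Set.mem_empty_iff_false, iff_self, iff_true]
    exact hg.2 a b
  · obtain ⟨i, hi, v, hv, hsw⟩ := hg
    refine ⟨hsw.1, Γ.parity_of_switchlike g hsw.1 {v} (fun a ha b hb => ?_)⟩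
    have hab : a ≠ b := fun h => Γ.not_both ha (h ▸ hb)
    rw [← ncard_pair_inter hab]
    exact hsw.2 a ha b hb

end BipartiteGraph

theorem switchGroup_lr_eq_parity_preservers' {V : Type*} (Γ : BipartiteGraph V)
    (hΓ : Γ.IsRandom) :
    (Γ.switchGroup {BSide.l, BSide.r} : Set (Equiv.Perm V)) =
      {σ : Equiv.Perm V | σ ∈ Γ.symLR ∧
        ∀ S : Set V, Γ.IsMNSubgraph S 2 2 → Γ.PreservesParityOn (⇑σ) S} := by
  classical
  open BipartiteGraph in
  ext σ
  simp only [SetLike.mem_coe, Set.mem_setOf_eq]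
  constructor
  · intro hmem
    rw [switchGroup, closedClosure] at hmem
    have hmemP := Subgroup.mem_sInf.mp hmem Γ.parityGroup
      ⟨Γ.parityGroup_closed, Γ.gens_subset_parity⟩
    exact ⟨hmemP.1, hmemP.2⟩
  · rintro ⟨hσ, hpar⟩
    rw [switchGroup, closedClosure]
    refine Subgroup.mem_sInf.mpr ?_
    rintro G ⟨hGclosed, hGgens⟩
    apply hGclosed
    intro F
    obtain ⟨a₀, ha₀⟩ := (hΓ.left_infinite.diff F.finite_toSet).nonempty
    obtain ⟨b₀, hb₀⟩ := (hΓ.right_infinite.diff F.finite_toSet).nonempty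
    set Dfin : Finset V := F.filter
      (fun x => (x ∈ Γ.left ∧ ¬(Γ.adj x b₀ ↔ Γ.adj (σ x) (σ b₀))) ∨
        (x ∈ Γ.right ∧ ¬((Γ.adj a₀ x ↔ Γ.adj (σ a₀) (σ x)) ↔
          (Γ.adj a₀ b₀ ↔ Γ.adj (σ a₀) (σ b₀))))) with hDfin
    have hkey : ∀ a ∈ F, a ∈ Γ.left → ∀ b ∈ F, b ∈ Γ.right →
        ((Γ.adj a b ↔ Γ.adj (σ a) (σ b)) ↔ (a ∈ Dfin ↔ b ∈ Dfin)) := by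
      intro a haF haL b hbF hbR
      have haa : a ≠ a₀ := fun h => ha₀.2 (Finset.mem_coe.mpr (h ▸ haF))
      have hbb : b ≠ b₀ := fun h => hb₀.2 (Finset.mem_coe.mpr (h ▸ hbF))
      have hq := (Γ.parity_quad σ hσ haL ha₀.1 hbR hb₀.1 haa hbb).mp
        (hpar _ (Γ.quad_isMN haL ha₀.1 hbR hb₀.1 haa hbb))
      have hrect := iff_rect hq
      have hma : (a ∈ Dfin) ↔ ¬(Γ.adj a b₀ ↔ Γ.adj (σ a) (σ b₀)) := by
        rw [hDfin, Finset.mem_filter]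
        constructor
        · rintro ⟨_, h1 | h2⟩
          · exact h1.2
          · exact (Γ.not_both haL h2.1).elim
        · intro h1; exact ⟨haF, Or.inl ⟨haL, h1⟩⟩
      have hmb : (b ∈ Dfin) ↔
          ¬((Γ.adj a₀ b ↔ Γ.adj (σ a₀) (σ b)) ↔
            (Γ.adj a₀ b₀ ↔ Γ.adj (σ a₀) (σ b₀))) := by
        rw [hDfin, Finset.mem_filter]
        constructor
        · rintro ⟨_, h1 | h2⟩
          · exact (Γ.not_both h1.1 hbR).elim
          · exact h2.2
        · intro h1; exact ⟨hbF, Or.inr ⟨hbR, h1⟩⟩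
      rw [hma, hmb]
      exact key_prop hrect
    obtain ⟨τ, hτG, hτsw⟩ := Γ.exists_switch_finset hΓ G hGgens Dfin
    have hGood : Good Γ Γ.adj (F.image τ) (fun z => σ (τ⁻¹ z)) := by
      refine ⟨?_, ?_, ?_⟩
      · intro u _ w _ huw
        simp only at huw
        exact (τ⁻¹ : Equiv.Perm V).injective (σ.injective huw)
      · intro x _
        have h1 := hσ.1 (τ⁻¹ x)
        have h2 := (Γ.symLR.inv_mem hτsw.1 : τ⁻¹ ∈ Γ.symLR).1 x
        exact h2.symm.trans h1.symm
      · intro z hz w hw hzl hwr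
        obtain ⟨a, haF, rfl⟩ := Finset.mem_image.mp hz
        obtain ⟨b, hbF, rfl⟩ := Finset.mem_image.mp hw
        have haL : a ∈ Γ.left := (hτsw.1.1 a).mp hzl
        have hbR : b ∈ Γ.right := (hτsw.1.2 b).mp hwr
        simp only [Equiv.Perm.inv_def, Equiv.symm_apply_apply]
        have h1 := hkey a haF haL b hbF hbR
        have h2 := hτsw.2 a haL b hbR
        have hab : a ≠ b := fun h => Γ.not_both haL (h ▸ hbR)
        rw [ncard_pair_inter hab] at h2
        simp only [Finset.mem_coe] at h2
        exact two_switch_prop h1 h2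
    obtain ⟨α, hα, hαagree⟩ := Γ.exists_aut_extend hΓ _ _ hGood
    refine ⟨α * τ, mul_mem (hGgens (Or.inl hα)) hτG, ?_⟩
    intro x hxF
    have hax := hαagree (τ x) (Finset.mem_image_of_mem τ hxF)
    show α (τ x) = σ x
    rw [hax]
    simp only [Equiv.Perm.inv_def, Equiv.symm_apply_apply]
/-- **Lemma 2.2.** `S_{l,r}(Γ)` is exactly the set of side-preserving
permutations which preserve the parity of cross-types in every
`(2 × 2)`-subgraph of `Γ`. -/
theorem switchGroup_lr_eq_parity_preservers {V : Type*} (Γ : BipartiteGraph V)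
    (hΓ : Γ.IsRandom) :
    (Γ.switchGroup {BSide.l, BSide.r} : Set (Equiv.Perm V)) =
      {σ : Equiv.Perm V | σ ∈ Γ.symLR ∧
        ∀ S : Set V, Γ.IsMNSubgraph S 2 2 → Γ.PreservesParityOn (⇑σ) S} := by
  exact switchGroup_lr_eq_parity_preservers' Γ hΓ
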